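/- arXiv:1812.06933 — 4 statements merged into one kernel-verified Lean document; each statement's English description precedes it below -/
import Mathlib

section
/- Let A be an abelian category and let a : E ⟶ G and b : G ⟶ H be morphisms of objects of A. Regard [E ⟶ G], [E ⟶ H], [G ⟶ H] as cochain complexes concentrated in degrees −1 and 0 with differentials a, b∘a, b respectively. Then in the derived category D(A) there is a distinguished triangle [E ⟶ G] ⟶ [E ⟶ H] ⟶ [G ⟶ H] ⟶ [E ⟶ G][1], where the first morphism is (id_E, b) and the second is (a, id_H). -/
open CategoryTheory CategoryTheory.Limits CategoryTheory.Pretriangulated ZeroObject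

variable {C : Type*} [Category C] [Abelian C]

/-- The cochain complex `[X ⟶ Y]` concentrated in degrees `-1` and `0`,
with differential `f`. -/
noncomputable def twoTermComplex {X Y : C} (f : X ⟶ Y) : CochainComplex C ℤ where
  X i := if i = -1 then X else if i = 0 then Y else 0
  d i j :=
    if h : i = -1 ∧ j = 0 then
      eqToHom (by simp [h.1]) ≫ f ≫ eqToHom (by simp [h.2])
    else 0
  shape i j hij := by
    try dsimp only
    rw [dif_neg]
    rintro ⟨rfl, rfl⟩
    exact hij (by simp)
  d_comp_d' i j k hij hjk := by
    try dsimp only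
    by_cases h : i = -1 ∧ j = 0
    · rw [dif_neg (fun h' : j = -1 ∧ k = 0 => by rw [h.2] at h'; norm_num at h'), comp_zero]
    · rw [dif_neg h, zero_comp]

/-- Given a commutative square `f ≫ v = u ≫ g`, the induced chain map `(u, v)` between the
associated two-term complexes `[X ⟶ Y]` and `[X' ⟶ Y']`. -/
noncomputable def twoTermHom {X Y X' Y' : C} (f : X ⟶ Y) (g : X' ⟶ Y')
    (u : X ⟶ X') (v : Y ⟶ Y') (sq : f ≫ v = u ≫ g) :
    twoTermComplex f ⟶ twoTermComplex g where
  f i :=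
    if h1 : i = -1 then
      eqToHom (by subst h1; simp [twoTermComplex]) ≫ u ≫
        eqToHom (by subst h1; simp [twoTermComplex])
    else if h0 : i = 0 then
      eqToHom (by subst h0; simp [twoTermComplex]) ≫ v ≫
        eqToHom (by subst h0; simp [twoTermComplex])
    else 0
  comm' i j hij := by
    have hij' : i + 1 = j := by simpa using hij
    by_cases h1 : i = -1
    · subst h1
      have hj : j = 0 := by omega
      subst hj
      simp [twoTermComplex, sq]
      change 𝟙 _ ≫ u ≫ 𝟙 _ ≫ g = f ≫ 𝟙 _ ≫ v ≫ 𝟙 _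
      simp [sq]
    · by_cases h0 : i = 0
      · subst h0
        have hj : j = 1 := by omega
        subst hj
        simp [twoTermComplex]
        exact (comp_zero).symm
      · have hne : ¬((-1 : ℤ) = -1 ∧ j = 0) → True := fun _ => trivial
        have hij0 : ¬(i = -1 ∧ j = 0) := fun h => h1 h.1
        simp only [twoTermComplex, dif_neg h1, dif_neg h0, dif_neg hij0, zero_comp, comp_zero]

open CochainComplex HomologicalComplex CochainComplex.HomComplex

lemma isZero_twoTermComplex_X {X Y : C} (f : X ⟶ Y) (n : ℤ) (h1 : n ≠ -1) (h0 : n ≠ 0) :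
    IsZero ((twoTermComplex f).X n) := by
  dsimp [twoTermComplex]
  rw [if_neg h1, if_neg h0]
  exact isZero_zero C

lemma twoTermComplex_X_neg_one {X Y : C} (f : X ⟶ Y) : (twoTermComplex f).X (-1) = X := by
  simp [twoTermComplex]

lemma twoTermComplex_X_zero {X Y : C} (f : X ⟶ Y) : (twoTermComplex f).X 0 = Y := by
  simp [twoTermComplex]

lemma twoTermComplex_d {X Y : C} (f : X ⟶ Y) :
    (twoTermComplex f).d (-1) 0 =
      eqToHom (twoTermComplex_X_neg_one f) ≫ f ≫ eqToHom (twoTermComplex_X_zero f).symm := by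
  simp [twoTermComplex]
  change f = 𝟙 _ ≫ f ≫ 𝟙 _
  simp

lemma twoTermComplex_d_eq_zero {X Y : C} (f : X ⟶ Y) (i j : ℤ) (h : ¬(i = -1 ∧ j = 0)) :
    (twoTermComplex f).d i j = 0 := by
  dsimp [twoTermComplex]
  rw [dif_neg h]
  rfl

local notation "S" => HomologicalComplex.single C (ComplexShape.up ℤ) (0 : ℤ)

noncomputable def ttAlpha {X Y : C} (f : X ⟶ Y) :
    Cochain ((S).obj X) (twoTermComplex f) (-1) :=
  Cochain.mk (fun p q hpq =>
    if h : p = 0 then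
      (eqToHom (by rw [h]) : ((S).obj X).X p ⟶ ((S).obj X).X 0) ≫
        (HomologicalComplex.singleObjXSelf (ComplexShape.up ℤ) 0 X).hom ≫
        eqToHom ((twoTermComplex_X_neg_one f).symm.trans (by congr 1; omega))
    else 0)

noncomputable def ttBeta {X Y : C} (f : X ⟶ Y) : (S).obj Y ⟶ twoTermComplex f where
  f n := if h : n = 0 then
      (eqToHom (by rw [h]) : ((S).obj Y).X n ⟶ ((S).obj Y).X 0) ≫
        (HomologicalComplex.singleObjXSelf (ComplexShape.up ℤ) 0 Y).hom ≫
        eqToHom ((twoTermComplex_X_zero f).symm.trans (by rw [h]))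
    else 0
  comm' i j hij := by
    rw [HomologicalComplex.single_obj_d, zero_comp]
    by_cases h : i = 0
    · subst h
      rw [dif_pos rfl, twoTermComplex_d_eq_zero f 0 j (by rintro ⟨h', _⟩; norm_num at h'),
        comp_zero]
    · rw [dif_neg h, zero_comp]

lemma tt_eq {X Y : C} (f : X ⟶ Y) :
    δ (-1) 0 (ttAlpha f) = Cochain.ofHom ((S).map f ≫ ttBeta f) := by
  ext p
  by_cases h : p = 0
  · subst h
    rw [δ_v (-1) 0 (neg_add_cancel 1) (ttAlpha f) 0 0 (add_zero 0) (-1) 1 (by norm_num) rfl]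
    rw [HomologicalComplex.single_obj_d, zero_comp, smul_zero, add_zero]
    simp only [ttAlpha, Cochain.mk_v, Cochain.ofHom_v, HomologicalComplex.comp_f]
    rw [HomologicalComplex.single_map_f_self, twoTermComplex_d]
    dsimp [ttBeta]
    simp
  · apply (HomologicalComplex.isZero_single_obj_X (ComplexShape.up ℤ) 0 X p h).eq_of_src
noncomputable def ttAlpha' {X Y : C} (f : X ⟶ Y) :
    Cochain (twoTermComplex f) ((S).obj X) 1 :=
  Cochain.mk (fun p q hpq =>
    if h : p = -1 then
      eqToHom ((by rw [h]; exact twoTermComplex_X_neg_one f :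
          (twoTermComplex f).X p = X)) ≫
        (HomologicalComplex.singleObjXSelf (ComplexShape.up ℤ) 0 X).inv ≫
        (eqToHom (by congr 1; omega) : ((S).obj X).X 0 ⟶ ((S).obj X).X q)
    else 0)

noncomputable def ttAlphaCocycle {X Y : C} (f : X ⟶ Y) :
    Cocycle (twoTermComplex f) ((S).obj X) 1 :=
  Cocycle.mk (ttAlpha' f) 2 (by norm_num) (by
    ext p q hpq
    rw [δ_v 1 2 (by norm_num) (ttAlpha' f) p q hpq (q - 1) (p + 1) rfl rfl]
    rw [HomologicalComplex.single_obj_d, comp_zero, zero_add]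
    by_cases h : p = -1
    · subst h
      have : (ttAlpha' f).v (-1 + 1) q (by omega) = 0 := by
        simp [ttAlpha', Cochain.mk_v]
      rw [this, comp_zero, smul_zero]
      simp
    · rw [twoTermComplex_d_eq_zero f p (p + 1) (by tauto), zero_comp, smul_zero]
      simp)

noncomputable def ttBeta' {X Y : C} (f : X ⟶ Y) :
    Cochain (twoTermComplex f) ((S).obj Y) 0 :=
  Cochain.mk (fun p q hpq =>
    if h : p = 0 then
      eqToHom ((by rw [h]; exact twoTermComplex_X_zero f : (twoTermComplex f).X p = Y)) ≫
        (HomologicalComplex.singleObjXSelf (ComplexShape.up ℤ) 0 Y).inv ≫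
        (eqToHom (by congr 1; omega) : ((S).obj Y).X 0 ⟶ ((S).obj Y).X q)
    else 0)

lemma tt_eq' {X Y : C} (f : X ⟶ Y) :
    δ 0 1 (ttBeta' f) +
      (ttAlphaCocycle f).1.comp (Cochain.ofHom ((S).map f)) (add_zero 1) = 0 := by
  ext p q hpq
  rw [Cochain.add_v, Cochain.comp_v _ _ (add_zero 1) p q q hpq (add_zero q),
    δ_v 0 1 (by norm_num) (ttBeta' f) p q hpq (q - 1) (p + 1) rfl rfl]
  rw [HomologicalComplex.single_obj_d, comp_zero, zero_add]
  by_cases h : p = -1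
  · subst h
    obtain rfl : q = 0 := by omega
    have h1 : (ttBeta' f).v (-1 + 1) 0 (by norm_num) =
        eqToHom (twoTermComplex_X_zero f) ≫
          (HomologicalComplex.singleObjXSelf (ComplexShape.up ℤ) 0 Y).inv := by
      simp [ttBeta', Cochain.mk_v]
    have h2 : (twoTermComplex f).d (-1) (-1 + 1) =
        eqToHom (twoTermComplex_X_neg_one f) ≫ f ≫ eqToHom (twoTermComplex_X_zero f).symm := by
      simp [twoTermComplex]
      change f = 𝟙 _ ≫ f ≫ 𝟙 _
      simp
    rw [h1, h2]
    simp only [ttAlphaCocycle, Cocycle.mk_coe, ttAlpha', Cochain.mk_v, dif_pos rfl,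
      Cochain.ofHom_v, Cochain.zero_v]
    rw [HomologicalComplex.single_map_f_self]
    simp
  · have h1 : (ttAlpha' f).v p q (by omega) = 0 := by
      simp [ttAlpha', Cochain.mk_v, dif_neg h]
    rw [twoTermComplex_d_eq_zero f p (p + 1) (by tauto), zero_comp, smul_zero, zero_add]
    simp [ttAlphaCocycle, h1]
open CochainComplex.mappingCone in
noncomputable def coneToTwo {X Y : C} (f : X ⟶ Y) (φ : (S).obj X ⟶ (S).obj Y)
    (hφ : φ = (S).map f) : mappingCone φ ⟶ twoTermComplex f :=
  mappingCone.desc φ (ttAlpha f) (ttBeta f) (by subst hφ; exact tt_eq f)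

open CochainComplex.mappingCone in
noncomputable def twoToCone {X Y : C} (f : X ⟶ Y) (φ : (S).obj X ⟶ (S).obj Y)
    (hφ : φ = (S).map f) : twoTermComplex f ⟶ mappingCone φ :=
  mappingCone.lift φ (ttAlphaCocycle f) (ttBeta' f) (by subst hφ; exact tt_eq' f)

open CochainComplex.mappingCone in
noncomputable def twoTermConeIso {X Y : C} (f : X ⟶ Y) (φ : (S).obj X ⟶ (S).obj Y)
    (hφ : φ = (S).map f) : mappingCone φ ≅ twoTermComplex f where
  hom := coneToTwo f φ hφ
  inv := twoToCone f φ hφ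
  hom_inv_id := by
    ext n
    rw [mappingCone.ext_from_iff φ (n + 1) n rfl]
    constructor
    · by_cases h : n = -1
      · subst h
        dsimp [coneToTwo, twoToCone]
        rw [mappingCone.inl_v_desc_f_assoc]
        rw [mappingCone.ext_to_iff φ (-1) 0 (by norm_num)]
        constructor
        · rw [Category.assoc, mappingCone.lift_f_fst_v]
          simp [ttAlpha, ttAlphaCocycle, ttAlpha', Cochain.mk_v]
        · rw [Category.assoc, mappingCone.lift_f_snd_v]
          simp [ttAlpha, ttBeta', Cochain.mk_v]
      · exact (HomologicalComplex.isZero_single_obj_X (ComplexShape.up ℤ) 0 X (n + 1)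
          (fun h' => h (by omega))).eq_of_src _ _
    · by_cases h : n = 0
      · subst h
        dsimp [coneToTwo, twoToCone]
        rw [mappingCone.inr_f_desc_f_assoc]
        rw [mappingCone.ext_to_iff φ 0 1 rfl]
        constructor
        · rw [Category.assoc, mappingCone.lift_f_fst_v]
          simp [ttBeta, ttAlphaCocycle, ttAlpha', Cochain.mk_v]
        · rw [Category.assoc, mappingCone.lift_f_snd_v]
          simp [ttBeta, ttBeta', Cochain.mk_v]
      · exact (HomologicalComplex.isZero_single_obj_X (ComplexShape.up ℤ) 0 Y n h).eq_of_src _ _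
  inv_hom_id := by
    ext n
    by_cases h1 : n = -1
    · subst h1
      dsimp [coneToTwo, twoToCone]
      rw [mappingCone.lift_desc_f _ _ _ _ _ _ _ (-1) 0 (by norm_num)]
      simp [ttAlpha, ttAlphaCocycle, ttAlpha', ttBeta, ttBeta', Cochain.mk_v]
    · by_cases h0 : n = 0
      · subst h0
        dsimp [coneToTwo, twoToCone]
        rw [mappingCone.lift_desc_f _ _ _ _ _ _ _ 0 1 rfl]
        simp [ttAlpha, ttAlphaCocycle, ttAlpha', ttBeta, ttBeta', Cochain.mk_v]
      · exact (isZero_twoTermComplex_X f n h1 h0).eq_of_src _ _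
section squares

variable {E G H : C} (a : E ⟶ G) (b : G ⟶ H)

lemma sqA :
    mappingCone.map ((S).map a) ((S).map a ≫ (S).map b) (𝟙 _) ((S).map b)
        (by rw [Category.id_comp]) ≫
      coneToTwo (a ≫ b) ((S).map a ≫ (S).map b) ((S).map_comp a b).symm =
    coneToTwo a ((S).map a) rfl ≫ twoTermHom a (a ≫ b) (𝟙 E) b (by simp) := by
  ext n
  by_cases h1 : n = -1
  · subst h1
    rw [mappingCone.ext_from_iff _ 0 (-1) (by norm_num)]
    constructor
    · simp only [HomologicalComplex.comp_f, coneToTwo, mappingCone.map,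
        mappingCone.inl_v_desc_f_assoc, Cochain.zero_cochain_comp_v, Cochain.ofHom_v,
        HomologicalComplex.id_f, Category.id_comp, mappingCone.inl_v_desc_f]
      dsimp [ttAlpha, twoTermHom]
      simp
    · exact (HomologicalComplex.isZero_single_obj_X (ComplexShape.up ℤ) 0 G (-1)
        (by norm_num)).eq_of_src _ _
  · by_cases h0 : n = 0
    · subst h0
      rw [mappingCone.ext_from_iff _ 1 0 (by norm_num)]
      constructor
      · exact (HomologicalComplex.isZero_single_obj_X (ComplexShape.up ℤ) 0 E 1
          (by norm_num)).eq_of_src _ _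
      · simp only [HomologicalComplex.comp_f, coneToTwo, mappingCone.map,
          mappingCone.inr_f_desc_f_assoc, Category.assoc, mappingCone.inr_f_desc_f]
        rw [HomologicalComplex.single_map_f_self]
        dsimp [ttBeta, twoTermHom]
        simp
    · exact (isZero_twoTermComplex_X (a ≫ b) n h1 h0).eq_of_tgt _ _

lemma sqB :
    mappingCone.map ((S).map a ≫ (S).map b) ((S).map b) ((S).map a) (𝟙 _)
        (by rw [Category.comp_id]) ≫
      coneToTwo b ((S).map b) rfl =
    coneToTwo (a ≫ b) ((S).map a ≫ (S).map b) ((S).map_comp a b).symm ≫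
      twoTermHom (a ≫ b) b a (𝟙 H) (by simp) := by
  ext n
  by_cases h1 : n = -1
  · subst h1
    rw [mappingCone.ext_from_iff _ 0 (-1) (by norm_num)]
    constructor
    · simp only [HomologicalComplex.comp_f, coneToTwo, mappingCone.map,
        mappingCone.inl_v_desc_f_assoc, Cochain.zero_cochain_comp_v, Cochain.ofHom_v,
        Category.assoc, mappingCone.inl_v_desc_f]
      rw [HomologicalComplex.single_map_f_self]
      dsimp [ttAlpha, twoTermHom]
      simp
    · exact (HomologicalComplex.isZero_single_obj_X (ComplexShape.up ℤ) 0 H (-1)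
        (by norm_num)).eq_of_src _ _
  · by_cases h0 : n = 0
    · subst h0
      rw [mappingCone.ext_from_iff _ 1 0 (by norm_num)]
      constructor
      · exact (HomologicalComplex.isZero_single_obj_X (ComplexShape.up ℤ) 0 G 1
          (by norm_num)).eq_of_src _ _
      · simp only [HomologicalComplex.comp_f, coneToTwo, mappingCone.map,
          mappingCone.inr_f_desc_f_assoc, HomologicalComplex.id_f, Category.id_comp,
          mappingCone.inr_f_desc_f]
        dsimp [ttBeta, twoTermHom]
        simp
    · exact (isZero_twoTermComplex_X b n h1 h0).eq_of_tgt _ _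

end squares
lemma coneToTwo_twoToCone {X Y : C} (f : X ⟶ Y) (φ : (S).obj X ⟶ (S).obj Y)
    (hφ : φ = (S).map f) : coneToTwo f φ hφ ≫ twoToCone f φ hφ = 𝟙 _ :=
  (twoTermConeIso f φ hφ).hom_inv_id

lemma twoToCone_coneToTwo {X Y : C} (f : X ⟶ Y) (φ : (S).obj X ⟶ (S).obj Y)
    (hφ : φ = (S).map f) : twoToCone f φ hφ ≫ coneToTwo f φ hφ = 𝟙 _ :=
  (twoTermConeIso f φ hφ).inv_hom_id

instance {X Y : C} (f : X ⟶ Y) (φ : (S).obj X ⟶ (S).obj Y) (hφ : φ = (S).map f) :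
    IsIso (coneToTwo f φ hφ) :=
  ⟨twoToCone f φ hφ, coneToTwo_twoToCone f φ hφ, twoToCone_coneToTwo f φ hφ⟩

instance {X Y : C} (f : X ⟶ Y) (φ : (S).obj X ⟶ (S).obj Y) (hφ : φ = (S).map f) :
    IsIso (twoToCone f φ hφ) :=
  ⟨coneToTwo f φ hφ, twoToCone_coneToTwo f φ hφ, coneToTwo_twoToCone f φ hφ⟩

section squares2

variable {E G H : C} (a : E ⟶ G) (b : G ⟶ H)

lemma sqA' :
    twoTermHom a (a ≫ b) (𝟙 E) b (by simp) ≫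
        twoToCone (a ≫ b) ((S).map a ≫ (S).map b) ((S).map_comp a b).symm =
      twoToCone a ((S).map a) rfl ≫
        mappingCone.map ((S).map a) ((S).map a ≫ (S).map b) (𝟙 _) ((S).map b)
          (by rw [Category.id_comp]) := by
  rw [← cancel_mono (coneToTwo (a ≫ b) ((S).map a ≫ (S).map b) ((S).map_comp a b).symm)]
  simp only [Category.assoc, twoToCone_coneToTwo, Category.comp_id]
  rw [sqA a b, reassoc_of% (twoToCone_coneToTwo a ((S).map a) rfl)]

lemma sqB' :
    twoTermHom (a ≫ b) b a (𝟙 H) (by simp) ≫ twoToCone b ((S).map b) rfl =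
      twoToCone (a ≫ b) ((S).map a ≫ (S).map b) ((S).map_comp a b).symm ≫
        mappingCone.map ((S).map a ≫ (S).map b) ((S).map b) ((S).map a) (𝟙 _)
          (by rw [Category.comp_id]) := by
  rw [← cancel_mono (coneToTwo b ((S).map b) rfl)]
  simp only [Category.assoc, twoToCone_coneToTwo, Category.comp_id]
  rw [sqB a b,
    reassoc_of% (twoToCone_coneToTwo (a ≫ b) ((S).map a ≫ (S).map b) ((S).map_comp a b).symm)]

end squares2

/-- Let `A` be an abelian category and `a : E ⟶ G`, `b : G ⟶ H` morphisms
in `A`. Regarding `[E ⟶ G]`, `[E ⟶ H]`, `[G ⟶ H]` as cochain complexes concentrated in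
degrees `-1` and `0` with differentials `a`, `b ∘ a`, `b`, there is a distinguished triangle
`[E ⟶ G] ⟶ [E ⟶ H] ⟶ [G ⟶ H] ⟶ [E ⟶ G][1]` in the derived category `D(A)`, whose first
morphism is `(𝟙 E, b)` and whose second morphism is `(a, 𝟙 H)`. -/
theorem derived_triangle_of_composition [HasDerivedCategory C]
    {E G H : C} (a : E ⟶ G) (b : G ⟶ H) :
    ∃ w : DerivedCategory.Q.obj (twoTermComplex b) ⟶
        (DerivedCategory.Q.obj (twoTermComplex a))⟦(1 : ℤ)⟧,
      Triangle.mk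
        (DerivedCategory.Q.map (twoTermHom a (a ≫ b) (𝟙 E) b (by simp)))
        (DerivedCategory.Q.map (twoTermHom (a ≫ b) b a (𝟙 H) (by simp)))
        w ∈ distTriang (DerivedCategory C) := by
  let Sa := (S).map a
  let Sb := (S).map b
  let Tc := CochainComplex.mappingConeCompTriangle Sa Sb
  let T' := DerivedCategory.Q.mapTriangle.obj Tc
  have hT' : T' ∈ distTriang (DerivedCategory C) := by
    refine Pretriangulated.isomorphic_distinguished _
      (DerivedCategory.Qh.map_distinguished _
        (HomotopyCategory.mappingConeCompTriangleh_distinguished Sa Sb)) _ ?_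
    exact (Functor.mapTriangleIso (DerivedCategory.quotientCompQhIso C)).symm.app Tc ≪≫
      (Functor.mapTriangleCompIso (HomotopyCategory.quotient C _) DerivedCategory.Qh).app Tc
  refine ⟨DerivedCategory.Q.map (twoToCone b Sb rfl) ≫ T'.mor₃ ≫
      (DerivedCategory.Q.map (coneToTwo a Sa rfl))⟦(1 : ℤ)⟧', ?_⟩
  refine Pretriangulated.isomorphic_distinguished _ hT' _ ?_
  haveI : IsIso (twoToCone a Sa rfl) := (twoTermConeIso a Sa rfl).isIso_inv
  haveI : IsIso (twoToCone (a ≫ b) (Sa ≫ Sb) ((S).map_comp a b).symm) := (twoTermConeIso (a ≫ b) (Sa ≫ Sb) ((S).map_comp a b).symm).isIso_inv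
  haveI : IsIso (twoToCone b Sb rfl) := (twoTermConeIso b Sb rfl).isIso_inv
  haveI i1 : IsIso (DerivedCategory.Q.map (twoToCone a Sa rfl)) := Functor.map_isIso _ _
  haveI i2 : IsIso (DerivedCategory.Q.map (twoToCone (a ≫ b) (Sa ≫ Sb) ((S).map_comp a b).symm)) := Functor.map_isIso _ _
  haveI i3 : IsIso (DerivedCategory.Q.map (twoToCone b Sb rfl)) := Functor.map_isIso _ _
  refine Triangle.isoMk _ _
    (@asIso _ _ _ _ (DerivedCategory.Q.map (twoToCone a Sa rfl)) i1)
    (@asIso _ _ _ _ (DerivedCategory.Q.map (twoToCone (a ≫ b) (Sa ≫ Sb) ((S).map_comp a b).symm)) i2)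
    (@asIso _ _ _ _ (DerivedCategory.Q.map (twoToCone b Sb rfl)) i3) ?_ ?_ ?_
  · dsimp [T', Tc]
    have h := congrArg (fun z => DerivedCategory.Q.map z) (sqA' a b)
    simp only [Functor.map_comp] at h
    exact h
  · dsimp [T', Tc]
    have h := congrArg DerivedCategory.Q.map (sqB' a b)
    simp only [Functor.map_comp] at h
    exact h
  · simp only [Triangle.mk_mor₃, asIso_hom]
    have h : (DerivedCategory.Q.map (coneToTwo a Sa rfl))⟦(1 : ℤ)⟧' ≫
        (DerivedCategory.Q.map (twoToCone a Sa rfl))⟦(1 : ℤ)⟧' = 𝟙 _ := by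
      simp only [← Functor.map_comp, coneToTwo_twoToCone,
        CategoryTheory.Functor.map_id]
    have e := congrArg (fun z => DerivedCategory.Q.map (twoToCone b Sb rfl) ≫ T'.mor₃ ≫ z) h
    exact (Category.assoc _ _ _).trans
      ((congrArg (fun z => DerivedCategory.Q.map (twoToCone b Sb rfl) ≫ z)
        (Category.assoc _ _ _)).trans (e.trans
        (congrArg (fun z => DerivedCategory.Q.map (twoToCone b Sb rfl) ≫ z)
          (Category.comp_id _))))
end

section
/- Let r, a, b be positive integers and let R = ℂ[u,v]/(uv). If there exists σ ∈ R with σ^r equal to the class of u^a − v^b in R, then r divides a and r divides b; in particular r divides a + b. -/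
open MvPolynomial in
private lemma node_aux (r : ℕ) (hr : 0 < r)
    (f : MvPolynomial (Fin 2) ℂ →+* Polynomial ℂ)
    (hf : f (X 0 * X 1) = 0)
    (σ : MvPolynomial (Fin 2) ℂ ⧸ Ideal.span {(X 0 * X 1 : MvPolynomial (Fin 2) ℂ)})
    (q : MvPolynomial (Fin 2) ℂ)
    (h : σ ^ r = Ideal.Quotient.mk (Ideal.span {(X 0 * X 1 : MvPolynomial (Fin 2) ℂ)}) q)
    (n : ℕ) (hq : (f q).natDegree = n) (hq0 : f q ≠ 0) : r ∣ n := by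
  have hle : Ideal.span {(X 0 * X 1 : MvPolynomial (Fin 2) ℂ)} ≤ RingHom.ker f := by
    rw [Ideal.span_le]
    intro x hx
    simp only [Set.mem_singleton_iff] at hx
    subst hx
    simpa [RingHom.mem_ker] using hf
  let φ := Ideal.Quotient.lift _ f hle
  have key : (φ σ) ^ r = f q := by
    have := congrArg φ h
    rw [map_pow] at this
    exact this.trans (Ideal.Quotient.lift_mk ..)
  refine ⟨(φ σ).natDegree, ?_⟩
  rw [← hq, ← key, Polynomial.natDegree_pow]

open MvPolynomial in
/-- Let `r, a, b` be positive integers and `R = ℂ[u,v]/(uv)`. If there exists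
`σ ∈ R` with `σ ^ r` equal to the class of `u ^ a - v ^ b` in `R`, then `r ∣ a` and `r ∣ b`;
in particular `r ∣ (a + b)`. -/
theorem node_rth_root_divisibility (r a b : ℕ) (hr : 0 < r) (ha : 0 < a) (hb : 0 < b)
    (σ : MvPolynomial (Fin 2) ℂ ⧸ Ideal.span {(X 0 * X 1 : MvPolynomial (Fin 2) ℂ)})
    (h : σ ^ r =
      Ideal.Quotient.mk (Ideal.span {(X 0 * X 1 : MvPolynomial (Fin 2) ℂ)})
        (X 0 ^ a - X 1 ^ b)) :
    r ∣ a ∧ r ∣ b ∧ r ∣ (a + b) := by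
  have hA : r ∣ a := by
    apply node_aux r hr (aeval ![Polynomial.X, 0]).toRingHom (by simp) σ _ h a
    · simp [zero_pow hb.ne']
    · simp [zero_pow hb.ne']
  have hB : r ∣ b := by
    apply node_aux r hr (aeval ![0, Polynomial.X]).toRingHom (by simp) σ _ h b
    · simp [zero_pow ha.ne']
    · simp [zero_pow ha.ne', sub_eq_zero]
  exact ⟨hA, hB, dvd_add hA hB⟩
end

section
/- Let R ⟶ S be a homomorphism of commutative rings, let θ : E₋₁ ⟶ E₀ and a : A ⟶ E₀ be R-module maps with a surjective, and let G = {(x, y) ∈ E₋₁ × A : θ(x) = a(y)} be the fibre product, with projections p : G ⟶ E₋₁ and θ̃ : G ⟶ A. Assume E₋₁ and E₀ are flat R-modules. Then the S-module map id_S ⊗ p induces an isomorphism ker(id_S ⊗ θ̃ : S ⊗_R G ⟶ S ⊗_R A) ≅ ker(id_S ⊗ θ : S ⊗_R E₋₁ ⟶ S ⊗_R E₀). -/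
open TensorProduct

/-- If `g₁` is injective with flat cokernel, then `g₁.lTensor M` is injective for any `M`. -/
lemma lTensor_injective_of_flat_coker {R : Type*} [CommRing R]
    {M N₁ N₂ N₃ : Type*} [AddCommGroup M] [Module R M]
    [AddCommGroup N₁] [Module R N₁] [AddCommGroup N₂] [Module R N₂]
    [AddCommGroup N₃] [Module R N₃] [Module.Flat R N₃]
    {g₁ : N₁ →ₗ[R] N₂} {g₂ : N₂ →ₗ[R] N₃}
    (hg₁ : Function.Injective g₁) (hgexact : Function.Exact g₁ g₂)
    (hgsurj : Function.Surjective g₂) :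
    Function.Injective (g₁.lTensor M) := by
  set f₂ : (M →₀ R) →ₗ[R] M := Finsupp.linearCombination R (id : M → M) with hf₂
  have hf₂surj : Function.Surjective f₂ :=
    Finsupp.linearCombination_surjective R Function.surjective_id
  exact lTensor_injective_of_exact_of_exact_of_rTensor_injective (M₁ := LinearMap.ker f₂)
    (f₂.exact_subtype_ker_map) hf₂surj hgexact hgsurj
    (Module.Flat.rTensor_preserves_injective_linearMap _ (LinearMap.ker f₂).injective_subtype)
    (Module.Flat.lTensor_preserves_injective_linearMap _ hg₁)

/-- Let `R → S` be a homomorphism of commutative rings, `θ : E₋₁ → E₀` and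
`a : A → E₀` be `R`-module maps with `a` surjective, and `G = {(x, y) ∈ E₋₁ × A : θ x = a y}`
the fibre product, with projections `p : G → E₋₁` and `θ̃ : G → A`. If `E₋₁` and `E₀` are flat
`R`-modules, then `id_S ⊗ p` induces an isomorphism
`ker (id_S ⊗ θ̃ : S ⊗ G → S ⊗ A) ≅ ker (id_S ⊗ θ : S ⊗ E₋₁ → S ⊗ E₀)`. -/
theorem fibre_product_kernel_base_change {R S E₁ E₀ A : Type*} [CommRing R] [CommRing S]
    [Algebra R S]
    [AddCommGroup E₁] [AddCommGroup E₀] [AddCommGroup A]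
    [Module R E₁] [Module R E₀] [Module R A]
    [Module.Flat R E₁] [Module.Flat R E₀]
    (θ : E₁ →ₗ[R] E₀) (a : A →ₗ[R] E₀) (ha : Function.Surjective a) :
    let G : Submodule R (E₁ × A) :=
      LinearMap.ker (θ ∘ₗ LinearMap.fst R E₁ A - a ∘ₗ LinearMap.snd R E₁ A)
    let p : G →ₗ[R] E₁ := LinearMap.fst R E₁ A ∘ₗ G.subtype
    let θ' : G →ₗ[R] A := LinearMap.snd R E₁ A ∘ₗ G.subtype
    ∃ e : LinearMap.ker (θ'.baseChange S) ≃ₗ[S] LinearMap.ker (θ.baseChange S),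
      ∀ x : LinearMap.ker (θ'.baseChange S), (e x : S ⊗[R] E₁) = p.baseChange S x.1 := by
  intro G p θ'
  set f : E₁ × A →ₗ[R] E₀ := θ ∘ₗ LinearMap.fst R E₁ A - a ∘ₗ LinearMap.snd R E₁ A with hf
  have hfsurj : Function.Surjective f := by
    intro e₀
    obtain ⟨y, hy⟩ := ha (-e₀)
    exact ⟨(0, y), by simp [hf, hy]⟩
  have hexact : Function.Exact G.subtype f := f.exact_subtype_ker_map
  -- injectivity of ι ⊗ S and right exactness of tensoring
  have hinj : Function.Injective (G.subtype.lTensor S) :=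
    lTensor_injective_of_flat_coker G.injective_subtype hexact hfsurj
  have hexactS : Function.Exact (G.subtype.lTensor S) (f.lTensor S) :=
    lTensor_exact S hexact hfsurj
  set π := TensorProduct.prodRight R R S E₁ A with hπ
  -- components of ι ⊗ S are p ⊗ S and θ' ⊗ S
  have hcomp : ∀ z : S ⊗[R] G, π (G.subtype.lTensor S z) =
      (p.baseChange S z, θ'.baseChange S z) := by
    intro z
    induction z using TensorProduct.induction_on with
    | zero => simp; rfl
    | tmul s g => rfl
    | add u v hu hv => simp [map_add, hu, hv, Prod.ext_iff]
  -- f ⊗ S in terms of the components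
  have hfcomp : ∀ w : S ⊗[R] (E₁ × A), f.lTensor S w =
      θ.baseChange S (π w).1 - a.baseChange S (π w).2 := by
    intro w
    induction w using TensorProduct.induction_on with
    | zero => simp
    | tmul s x => obtain ⟨x1, x2⟩ := x; simp [hπ, hf, tmul_sub]
    | add u v hu hv => simp only [map_add, hu, hv, Prod.fst_add, Prod.snd_add]; abel
  -- the forward map
  have hker : ∀ x : LinearMap.ker (θ'.baseChange S),
      θ.baseChange S (p.baseChange S x.1) = 0 := by
    intro ⟨x, hx⟩
    have hx' : θ'.baseChange S x = 0 := hx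
    have : f.lTensor S (G.subtype.lTensor S x) = 0 := by
      rw [hfcomp, hcomp, hx']
      have : (θ.baseChange S).comp (p.baseChange S) = (a.baseChange S).comp (θ'.baseChange S) := by
        rw [← LinearMap.baseChange_comp, ← LinearMap.baseChange_comp]
        congr 1
        ext g
        have h : θ g.1.1 - a g.1.2 = 0 := g.2
        simp only [LinearMap.comp_apply]
        exact sub_eq_zero.mp h
      have h2 := congrArg (fun m => m x) this
      simp only [LinearMap.comp_apply] at h2
      simp [h2, hx']
    rw [hfcomp, hcomp, hx', map_zero, sub_zero] at this
    exact this
  set fwd : LinearMap.ker (θ'.baseChange S) →ₗ[S] LinearMap.ker (θ.baseChange S) :=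
    ((p.baseChange S).comp (LinearMap.ker (θ'.baseChange S)).subtype).codRestrict _
      (fun x => hker x) with hfwd
  have hbij : Function.Bijective fwd := by
    constructor
    · intro x y hxy
      have hp : p.baseChange S x.1 = p.baseChange S y.1 := congrArg Subtype.val hxy
      apply Subtype.ext
      apply hinj
      apply π.injective
      have hx0 : θ'.baseChange S x.1 = 0 := x.2
      have hy0 : θ'.baseChange S y.1 = 0 := y.2
      rw [hcomp x.1, hcomp y.1, hp, hx0, hy0]
    · intro ⟨y, hy⟩
      have hy' : θ.baseChange S y = 0 := hy
      set w : S ⊗[R] (E₁ × A) := π.symm (y, 0) with hw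
      have hπw : π w = (y, 0) := π.apply_symm_apply _
      have hwker : f.lTensor S w = 0 := by rw [hfcomp, hπw]; simp [hy']
      obtain ⟨z, hz⟩ := (hexactS w).mp hwker
      have hz' := hcomp z
      rw [hz, hπw] at hz'
      have h1 : y = p.baseChange S z := congrArg Prod.fst hz'
      have h2 : (0 : S ⊗[R] A) = θ'.baseChange S z := congrArg Prod.snd hz'
      exact ⟨⟨z, h2.symm⟩, Subtype.ext h1.symm⟩
  exact ⟨LinearEquiv.ofBijective fwd hbij, fun x => rfl⟩
end

section
/- Let k be an infinite field, R a Noetherian commutative k-algebra, and M an invertible R-module (a finitely generated projective R-module of constant rank 1). Suppose m₁, …, m_n generate M as an R-module. Then there exist c₁, …, c_n ∈ k such that, setting m = c₁m₁ + ⋯ + c_n m_n, the R-module map R ⟶ M, x ↦ x·m, is injective. -/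
open Submodule IsLocalRing

/-- Auxiliary: at each prime `P`, the set of coefficient vectors `c` whose combination fails
to generate the localized module at `P` is a proper subspace; outside it, any `x` killing
the combination dies in the localization at `P`. -/
theorem exists_regular_section_aux {k R M : Type*} [Field k]
    [CommRing R] [Algebra k R]
    [AddCommGroup M] [Module R M] [Module.Finite R M] [Module.Projective R M]
    (hrank : ∀ p : PrimeSpectrum R, Module.rankAtStalk M p = 1)
    (n : ℕ) (m : Fin n → M) (hgen : Submodule.span R (Set.range m) = ⊤)
    (P : Ideal R) (hP : P.IsPrime) :
    ∃ B : Subspace k (Fin n → k), B ≠ ⊤ ∧ ∀ c : Fin n → k, c ∉ B → ∀ x : R,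
      (x • (∑ i, algebraMap k R (c i) • m i) = 0) →
      algebraMap R (Localization.AtPrime P) x = 0 := by
  classical
  haveI := hP
  haveI : Module.FinitePresentation R M := Module.finitePresentation_of_projective R M
  set Rp := Localization.AtPrime P with hRp
  set Mp := LocalizedModule P.primeCompl M with hMp
  haveI : Module.Free Rp Mp := Module.free_of_flat_of_isLocalRing
  have hr1 : Module.finrank Rp Mp = 1 := hrank ⟨P, hP⟩
  let b : Module.Basis (Fin 1) Rp Mp := Module.basisUnique (Fin 1) hr1
  let f : M →ₗ[R] Mp := LocalizedModule.mkLinearMap P.primeCompl M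
  let ψ : M →ₗ[R] Rp := ((b.coord 0).restrictScalars R).comp f
  -- the k-linear map (Fin n → k) → Rp
  let L : (Fin n → k) →ₗ[k] Rp := ∑ i, (LinearMap.proj i).smulRight (ψ (m i))
  have hLapp : ∀ c : Fin n → k, L c = ∑ i, c i • ψ (m i) := by
    intro c
    simp [L, LinearMap.sum_apply]
  have hLψ : ∀ c : Fin n → k, L c = ψ (∑ i, algebraMap k R (c i) • m i) := by
    intro c
    rw [map_sum, hLapp]
    refine Finset.sum_congr rfl fun i _ => ?_
    rw [map_smul, algebraMap_smul]
  refine ⟨Submodule.comap L ((maximalIdeal Rp).restrictScalars k), ?_, ?_⟩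
  · -- properness
    intro htop
    have hmem : ∀ i, ψ (m i) ∈ maximalIdeal Rp := by
      intro i
      have : (Pi.single i (1 : k)) ∈ (⊤ : Subspace k (Fin n → k)) := mem_top
      rw [← htop] at this
      have h' : L (Pi.single i 1) ∈ maximalIdeal Rp := this
      rw [hLapp] at h'
      have heq : ∑ j, (Pi.single i (1 : k) : Fin n → k) j • ψ (m j) = ψ (m i) := by
        refine (Finset.sum_eq_single_of_mem i (Finset.mem_univ i) ?_).trans (by simp)
        intro j _ hj
        rw [Pi.single_eq_of_ne hj, zero_smul]
      rwa [heq] at h'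
    have hcoordsurj : Function.Surjective (b.coord 0) := by
      intro r
      refine ⟨r • b 0, ?_⟩
      simp [Module.Basis.coord_apply]
    have hspan : span Rp (⇑f '' Set.range m) = ⊤ :=
      span_eq_top_of_isLocalizedModule Rp P.primeCompl f hgen
    have h1 : (⊤ : Ideal Rp) = Submodule.map (b.coord 0) ⊤ := by
      rw [Submodule.map_top, LinearMap.range_eq_top.mpr hcoordsurj]
    have h2 : (⊤ : Ideal Rp) ≤ maximalIdeal Rp := by
      rw [h1, ← hspan, Submodule.map_span]
      refine span_le.mpr ?_
      rintro z hz
      obtain ⟨w, hw, rfl⟩ := hz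
      obtain ⟨v, hv, rfl⟩ := hw
      obtain ⟨i, rfl⟩ := hv
      exact hmem i
    exact (IsLocalRing.maximalIdeal.isMaximal Rp).ne_top (top_le_iff.mp h2)
  · -- regularity outside B
    intro c hc x hx
    have hunit : IsUnit (L c) := by
      rw [← IsLocalRing.notMem_maximalIdeal]
      exact fun h => hc h
    have h0 : algebraMap R Rp x * L c = 0 := by
      rw [hLψ, ← Algebra.smul_def, ← map_smul, hx, map_zero]
    exact (IsUnit.mul_left_eq_zero hunit).mp h0

/-- Let `k` be an infinite field, `R` a Noetherian commutative `k`-algebra,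
and `M` an invertible `R`-module (a finitely generated projective `R`-module of constant
rank `1`). If `m₁, …, mₙ` generate `M` as an `R`-module, then there exist `c₁, …, cₙ ∈ k`
such that, setting `m = c₁ m₁ + ⋯ + cₙ mₙ`, the `R`-module map `R → M`, `x ↦ x • m`,
is injective. -/
theorem exists_regular_section {k R M : Type*} [Field k] [Infinite k]
    [CommRing R] [IsNoetherianRing R] [Algebra k R]
    [AddCommGroup M] [Module R M] [Module.Finite R M] [Module.Projective R M]
    (hrank : ∀ p : PrimeSpectrum R, Module.rankAtStalk M p = 1)
    (n : ℕ) (m : Fin n → M) (hgen : Submodule.span R (Set.range m) = ⊤) :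
    ∃ c : Fin n → k,
      Function.Injective fun x : R => x • (∑ i, algebraMap k R (c i) • m i) := by
  classical
  obtain ⟨s, hs0, hsprim⟩ := Ideal.isLasker R R ⊥
  -- choose a proper subspace for each primary component
  have key := fun (Q : s) => exists_regular_section_aux (k := k) hrank n m hgen
    (Ideal.radical (Q : Ideal R)) (Ideal.isPrime_radical (hsprim Q.2))
  choose B hB hreg using key
  -- pick c outside the union
  have hcover : (⋃ Q : s, (B Q : Set (Fin n → k))) ≠ Set.univ := by
    intro h
    obtain ⟨Q, hQ⟩ := Subspace.exists_eq_top_of_iUnion_eq_univ h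
    exact hB Q hQ
  obtain ⟨c, hc⟩ : ∃ c : Fin n → k, c ∉ ⋃ Q : s, (B Q : Set (Fin n → k)) := by
    by_contra h
    push_neg at h
    exact hcover (Set.eq_univ_of_forall h)
  refine ⟨c, ?_⟩
  have hker : ∀ x : R, x • (∑ i, algebraMap k R (c i) • m i) = 0 → x = 0 := by
    intro x hx
    by_contra hx0
    -- find a primary component not containing x
    have : ∃ Q ∈ s, x ∉ Q := by
      by_contra h
      push_neg at h
      have : x ∈ s.inf id := by
        rw [Finset.inf_eq_iInf]
        exact Submodule.mem_iInf _ |>.mpr fun Q => Submodule.mem_iInf _ |>.mpr fun hQ => h Q hQ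
      rw [hs0] at this
      exact hx0 this
    obtain ⟨Q, hQs, hxQ⟩ := this
    have hcB : c ∉ B ⟨Q, hQs⟩ := fun h => hc (Set.mem_iUnion.mpr ⟨⟨Q, hQs⟩, h⟩)
    haveI : (Ideal.radical Q).IsPrime := Ideal.isPrime_radical (hsprim hQs)
    have h0 := hreg ⟨Q, hQs⟩ c hcB x hx
    rw [IsLocalization.map_eq_zero_iff (Ideal.radical Q).primeCompl] at h0
    obtain ⟨⟨u, hu⟩, huc⟩ := h0
    have hxu : x * u ∈ Q := by
      rw [mul_comm, huc]
      exact Q.zero_mem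
    rcases (Ideal.isPrimary_iff.mp (hsprim hQs)).2 hxu with h | h
    · exact hxQ h
    · exact hu h
  intro a b hab
  have : (a - b) • (∑ i, algebraMap k R (c i) • m i) = 0 := by
    rw [sub_smul, sub_eq_zero]
    exact hab
  exact sub_eq_zero.mp (hker _ this)
end
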